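/- arXiv:2404.16293 — 3 statements merged into one kernel-verified Lean document; each statement's English description precedes it below -/
import Mathlib

section
/- For every nonzero rational number u with u ≠ 1, the function χ defined by χ(u) = (u + u⁻¹ + β(u) − 3)/12 satisfies χ(u) = χ(u+1) + χ(u⁻¹+1), where β(a/b) = gcd(a,b)²/(ab). -/
/-- β(u) = gcd(a,b)²/(a·b) for u = a/b in lowest terms (and β(0) = 0). -/
def betaQ (u : ℚ) : ℚ :=
  ((Int.gcd u.num (u.den : ℤ) : ℤ)^2 : ℚ) / ((u.num : ℚ) * (u.den : ℚ))

/-- χ(u) = (u + u⁻¹ + β(u) − 3)/12. -/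
def chiQ (u : ℚ) : ℚ := (u + u⁻¹ + betaQ u - 3) / 12

lemma betaQ_eq_pos (a b : ℤ) (hb : 0 < b) (h : Int.gcd a b = 1) :
    betaQ ((a : ℚ) / b) = 1 / ((a : ℚ) * b) := by
  have hnum := Rat.num_div_eq_of_coprime hb h
  have hden := Rat.den_div_eq_of_coprime hb h
  unfold betaQ
  rw [hnum]
  rw [show (((a : ℚ) / b).den : ℚ) = ((b : ℤ) : ℚ) by exact_mod_cast congrArg (Int.cast : ℤ → ℚ) hden]
  have : Int.gcd a (((a : ℚ) / b).den : ℤ) = 1 := by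
    rw [hden]; exact h
  rw [this]
  norm_num

lemma betaQ_eq (a b : ℤ) (hb : b ≠ 0) (h : Int.gcd a b = 1) :
    betaQ ((a : ℚ) / b) = 1 / ((a : ℚ) * b) := by
  rcases hb.lt_or_gt with hb' | hb'
  · have h' : Int.gcd (-a) (-b) = 1 := by rwa [Int.neg_gcd, Int.gcd_neg]
    have := betaQ_eq_pos (-a) (-b) (by omega) h'
    rw [show ((-a : ℤ) : ℚ) / ((-b : ℤ) : ℚ) = (a : ℚ) / b by push_cast; ring] at this
    rw [this]; push_cast; ring_nf
  · exact betaQ_eq_pos a b hb' h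

/-- For every nonzero rational `u` with `u ≠ 1`, one has
`χ(u) = χ(u+1) + χ(u⁻¹+1)`. -/
theorem chiQ_add_identity (u : ℚ) (hu0 : u ≠ 0) (hu1 : u ≠ 1) :
    chiQ u = chiQ (u + 1) + chiQ (u⁻¹ + 1) := by
  by_cases hm1 : u = -1
  · subst hm1; norm_num [chiQ, betaQ]
  set a := u.num with ha
  set b := (u.den : ℤ) with hb
  have hbpos : 0 < b := by rw [hb]; exact_mod_cast u.pos
  have ha0 : a ≠ 0 := Rat.num_ne_zero.mpr hu0
  have hg : Int.gcd a b = 1 := u.reduced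
  have hu : u = (a : ℚ) / b := by exact_mod_cast (Rat.num_div_den u).symm
  have haQ : (a : ℚ) ≠ 0 := Int.cast_ne_zero.mpr ha0
  have hbQ : (b : ℚ) ≠ 0 := Int.cast_ne_zero.mpr hbpos.ne'
  have hab : (a : ℚ) + b ≠ 0 := by
    intro hc
    apply hm1
    rw [hu]
    have : (a : ℚ) = -b := by linarith
    rw [this]; field_simp
  have hcop : IsCoprime a b := Int.isCoprime_iff_gcd_eq_one.mpr hg
  have hg1 : Int.gcd (a + b) b = 1 := by
    have : IsCoprime (a + b * 1) b := hcop.add_mul_left_left 1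
    rw [mul_one] at this
    exact Int.isCoprime_iff_gcd_eq_one.mp this
  have hg2 : Int.gcd (a + b) a = 1 := by
    have : IsCoprime (b + a * 1) a := hcop.symm.add_mul_left_left 1
    rw [mul_one, add_comm] at this
    exact Int.isCoprime_iff_gcd_eq_one.mp this
  have h1 : u + 1 = ((a + b : ℤ) : ℚ) / ((b : ℤ) : ℚ) := by
    rw [hu]; push_cast; field_simp
  have h2 : u⁻¹ + 1 = ((a + b : ℤ) : ℚ) / ((a : ℤ) : ℚ) := by
    rw [hu]; push_cast; field_simp; ring
  have hbu : betaQ u = 1 / ((a : ℚ) * b) := by rw [hu]; exact betaQ_eq a b hbpos.ne' hg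
  have hb1 : betaQ (u + 1) = 1 / (((a : ℚ) + b) * b) := by
    rw [h1, betaQ_eq (a + b) b hbpos.ne' hg1]; push_cast; ring_nf
  have hb2 : betaQ (u⁻¹ + 1) = 1 / (((a : ℚ) + b) * a) := by
    rw [h2, betaQ_eq (a + b) a ha0 hg2]; push_cast; ring_nf
  unfold chiQ
  rw [hbu, hb1, hb2, h1, h2, hu]
  have hi1 : (((a + b : ℤ) : ℚ) / ((b : ℤ) : ℚ))⁻¹ = (b : ℚ) / ((a : ℚ) + b) := by
    push_cast; rw [inv_div]
  have hi2 : (((a + b : ℤ) : ℚ) / ((a : ℤ) : ℚ))⁻¹ = (a : ℚ) / ((a : ℚ) + b) := by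
    push_cast; rw [inv_div]
  rw [hi1, hi2]
  push_cast
  rw [inv_div]
  field_simp
  ring
end

section
/- Let r ≥ 1, let e₁,…,e_r be integers with each e_j ≥ 2, and define ξ_{r+1} = 0, ξ_r = 1, ξ_{j-1} = e_j·ξ_j − ξ_{j+1}. Set n = ξ₀. Then ξ₁/n < 1/(e₁ − 1), and for every 2 ≤ j ≤ r one has ξ_j/n < 1/(2e_j − 3). -/
/-- Let `r ≥ 1`, `e_j ≥ 2`, and `ξ` as in the Hirzebruch–Jung recursion with
`n = ξ₀`.  Then `ξ₁/n < 1/(e₁−1)` and `ξ_j/n < 1/(2e_j−3)` for `2 ≤ j ≤ r`. -/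
theorem xi_coefficient_bounds (r : ℕ) (hr : 1 ≤ r) (e : ℕ → ℤ)
    (he : ∀ j, 1 ≤ j → j ≤ r → 2 ≤ e j)
    (ξ : ℕ → ℤ) (hξ_top : ξ (r + 1) = 0) (hξ_r : ξ r = 1)
    (hrec : ∀ j, 1 ≤ j → j ≤ r → ξ (j - 1) = e j * ξ j - ξ (j + 1))
    (n : ℤ) (hn : n = ξ 0) :
    (ξ 1 : ℚ) / (n : ℚ) < 1 / ((e 1 : ℚ) - 1) ∧
    ∀ j, 2 ≤ j → j ≤ r → (ξ j : ℚ) / (n : ℚ) < 1 / (2 * (e j : ℚ) - 3) := by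
  -- downward induction: 0 ≤ ξ (j+1) and ξ (j+1) < ξ j for j ≤ r
  have step : ∀ m, m ≤ r → 0 ≤ ξ (r - m + 1) ∧ ξ (r - m + 1) < ξ (r - m) := by
    intro m
    induction m with
    | zero =>
      intro _
      simp only [Nat.sub_zero]
      rw [hξ_top, hξ_r]
      exact ⟨le_refl 0, by norm_num⟩
    | succ m ih =>
      intro hm
      have hmr : m ≤ r := by omega
      obtain ⟨ih0, ih1⟩ := ih hmr
      set j := r - (m + 1) with hj
      have hj1 : r - m = j + 1 := by omega
      rw [hj1] at ih0 ih1
      have hjr : j + 1 ≤ r := by omega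
      have hrec' := hrec (j + 1) (by omega) hjr
      have hjj : j + 1 - 1 = j := rfl
      rw [hjj] at hrec'
      have he' := he (j + 1) (by omega) hjr
      constructor
      · nlinarith
      · nlinarith
  have hdec : ∀ j, j ≤ r → 0 ≤ ξ (j + 1) ∧ ξ (j + 1) < ξ j := by
    intro j hj
    have h := step (r - j) (by omega)
    rw [show r - (r - j) = j from by omega] at h
    exact h
  have hmono : ∀ j, j ≤ r + 1 → ξ j ≤ ξ 0 := by
    intro j
    induction j with
    | zero => intro _; exact le_refl _
    | succ j ih =>
      intro hj
      have h := hdec j (by omega)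
      have := ih (by omega)
      omega
  have hn1 : 1 ≤ n := by
    have h0 := hdec 0 (Nat.zero_le r)
    omega
  have hnQ : (0 : ℚ) < (n : ℚ) := by exact_mod_cast lt_of_lt_of_le one_pos hn1
  constructor
  · -- first bound
    have he1 := he 1 le_rfl hr
    have h1 := hdec 1 hr
    have h0 := hdec 0 (Nat.zero_le r)
    have hrec1 := hrec 1 le_rfl hr
    simp only [Nat.sub_self] at hrec1
    have hkey : (e 1 - 1) * ξ 1 < n := by nlinarith [h0.1, h0.2, h1.1, h1.2]
    have hd : (0 : ℚ) < (e 1 : ℚ) - 1 := by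
      have h2 : (2 : ℚ) ≤ (e 1 : ℚ) := by exact_mod_cast he1
      linarith
    rw [div_lt_div_iff₀ hnQ hd]
    have hkey' : ((e 1 : ℚ) - 1) * (ξ 1 : ℚ) < (n : ℚ) := by exact_mod_cast hkey
    nlinarith [hkey']
  · intro j hj2 hjr
    obtain ⟨k, rfl⟩ : ∃ k, j = k + 2 := ⟨j - 2, by omega⟩
    have hAB := hdec (k + 2) hjr
    have hA := hdec (k + 1) (by omega)
    have hB := hdec k (by omega)
    have hrecj := hrec (k + 2) (by omega) hjr
    have hrecj1 := hrec (k + 1) (by omega) (by omega)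
    have hjj : k + 2 - 1 = k + 1 := rfl
    have hjj' : k + 1 - 1 = k := rfl
    rw [hjj] at hrecj
    rw [hjj'] at hrecj1
    have he2 := he (k + 2) (by omega) hjr
    have he1 := he (k + 1) (by omega) (by omega)
    have hmk : ξ k ≤ ξ 0 := hmono k (by omega)
    -- key integer inequality: (2 e_j - 3) ξ_j < n
    have hkey : (2 * e (k + 2) - 3) * ξ (k + 2) < n := by
      have hx1 : 0 ≤ ξ (k + 1) := by linarith [hAB.1, hAB.2]
      nlinarith [hAB.1, hAB.2, hA.2, mul_nonneg (by linarith : (0:ℤ) ≤ e (k+1) - 2) hx1]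
    have hd : (0 : ℚ) < 2 * (e (k + 2) : ℚ) - 3 := by
      have h2 : (2 : ℚ) ≤ (e (k + 2) : ℚ) := by exact_mod_cast he2
      linarith
    rw [div_lt_div_iff₀ hnQ hd]
    have hkey' : (2 * (e (k + 2) : ℚ) - 3) * (ξ (k + 2) : ℚ) < (n : ℚ) := by
      exact_mod_cast hkey
    nlinarith [hkey']
end

section
/- Let r ≥ 1, e₁,…,e_r integers with each e_k ≥ 2. Define ξ_{r+1}=0, ξ_r=1, ξ_{j-1}=e_jξ_j−ξ_{j+1}, and μ₀=0, μ₁=1, μ_{k+1}=e_kμ_k−μ_{k-1}. Set n = ξ₀, q = ξ₁. Then Σ_{k=1}^{r} 1/(μ_k·μ_{k+1}) = q/n. -/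
/-- With `ξ` the backward and `μ` the forward Hirzebruch–Jung recursion,
`n = ξ₀`, `q = ξ₁`, one has `∑_{k=1}^{r} 1/(μ_k μ_{k+1}) = q/n`. -/
theorem sum_inv_mu_eq_q_div_n (r : ℕ) (hr : 1 ≤ r) (e : ℕ → ℤ)
    (he : ∀ j, 1 ≤ j → j ≤ r → 2 ≤ e j)
    (ξ : ℕ → ℤ) (hξ_top : ξ (r + 1) = 0) (hξ_r : ξ r = 1)
    (hξrec : ∀ j, 1 ≤ j → j ≤ r → ξ (j - 1) = e j * ξ j - ξ (j + 1))
    (μ : ℕ → ℤ) (hμ0 : μ 0 = 0) (hμ1 : μ 1 = 1)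
    (hμrec : ∀ k, 1 ≤ k → k ≤ r → μ (k + 1) = e k * μ k - μ (k - 1))
    (n q : ℤ) (hn : n = ξ 0) (hq : q = ξ 1) :
    ∑ k ∈ Finset.Icc 1 r, (1 : ℚ) / ((μ k : ℚ) * (μ (k + 1) : ℚ)) =
      (q : ℚ) / (n : ℚ) := by
  -- μ is positive and strictly increasing on [1, r+1]
  have hμpos : ∀ k, 1 ≤ k → k ≤ r + 1 → 0 < μ k ∧ μ (k - 1) < μ k := by
    intro k
    induction k with
    | zero => intro h; omega
    | succ k ih =>
      intro _ hk
      rcases Nat.eq_zero_or_pos k with hk0 | hk1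
      · subst hk0; simp [hμ0, hμ1]
      · have hkr : k ≤ r := by omega
        obtain ⟨hp, hlt⟩ := ih hk1 (by omega)
        have hrec := hμrec k hk1 hkr
        have he2 := he k hk1 hkr
        have h2 : 2 * μ k ≤ e k * μ k := by nlinarith
        have hksub : k + 1 - 1 = k := rfl
        rw [hksub]
        constructor <;> linarith
  -- ξ is nonnegative and strictly decreasing (stated via distance from the top)
  have hξdec : ∀ i, i ≤ r → 0 ≤ ξ (r + 1 - i) ∧ ξ (r + 1 - i) < ξ (r - i) := by
    intro i
    induction i with
    | zero => intro _; simp [hξ_top, hξ_r]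
    | succ i ih =>
      intro hi
      obtain ⟨h0, hlt⟩ := ih (by omega)
      set j := r - i with hj
      have hjge : 1 ≤ j := by omega
      have hjle : j ≤ r := by omega
      have h0' : 0 ≤ ξ (j + 1) := by rwa [show r + 1 - i = j + 1 by omega] at h0
      have hlt' : ξ (j + 1) < ξ j := by rwa [show r + 1 - i = j + 1 by omega] at hlt
      have hrec := hξrec j hjge hjle
      have he2 := he j hjge hjle
      have g1 : r + 1 - (i + 1) = j := by omega
      have g2 : r - (i + 1) = j - 1 := by omega
      rw [g1, g2, hrec]
      have hξj : 1 ≤ ξ j := by omega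
      have h2 : 2 * ξ j ≤ e j * ξ j := by nlinarith
      constructor <;> linarith
  -- the Wronskian is constant, equal to ξ 0
  have hW : ∀ k, k ≤ r → μ (k + 1) * ξ k - μ k * ξ (k + 1) = ξ 0 := by
    intro k
    induction k with
    | zero => intro _; simp [hμ0, hμ1]
    | succ k ih =>
      intro hk
      have ihh := ih (by omega)
      have hA := hμrec (k + 1) (by omega) hk
      have hB := hξrec (k + 1) (by omega) hk
      have hsub : k + 1 - 1 = k := rfl
      rw [hsub] at hA hB
      linear_combination ihh - μ (k + 1) * hB + ξ (k + 1) * hA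
  -- positivity consequences
  have hn0 : 0 < ξ 0 := by
    have h := hξdec r le_rfl
    rw [show r + 1 - r = 1 by omega, show r - r = 0 by omega] at h
    omega
  have hnQ : (n : ℚ) ≠ 0 := by
    rw [hn]; exact_mod_cast (ne_of_gt hn0)
  have hμne : ∀ k, 1 ≤ k → k ≤ r + 1 → ((μ k : ℚ)) ≠ 0 := by
    intro k h1 h2
    exact_mod_cast ne_of_gt (hμpos k h1 h2).1
  -- rewrite each term as a telescoping difference
  have hterm : ∀ k ∈ Finset.Icc 1 r,
      (1 : ℚ) / ((μ k : ℚ) * (μ (k + 1) : ℚ)) =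
        ((ξ k : ℚ) / (μ k : ℚ) - (ξ (k + 1) : ℚ) / (μ (k + 1) : ℚ)) / (n : ℚ) := by
    intro k hk
    simp only [Finset.mem_Icc] at hk
    have h1 := hμne k hk.1 (by omega)
    have h2 := hμne (k + 1) (by omega) (by omega)
    have hw := hW k hk.2
    have hwQ : (μ (k + 1) : ℚ) * (ξ k : ℚ) - (μ k : ℚ) * (ξ (k + 1) : ℚ) = (n : ℚ) := by
      rw [hn]; exact_mod_cast hw
    field_simp
    linear_combination -hwQ
  rw [Finset.sum_congr rfl hterm, ← Finset.sum_div]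
  have hIcc : Finset.Icc 1 r = Finset.Ico 1 (r + 1) := (Finset.Ico_add_one_right_eq_Icc 1 r).symm
  rw [hIcc, Finset.sum_Ico_eq_sum_range]
  have hrr : r + 1 - 1 = r := rfl
  rw [hrr]
  have htel : (∑ i ∈ Finset.range r,
      ((ξ (1 + i) : ℚ) / (μ (1 + i) : ℚ) - (ξ (1 + i + 1) : ℚ) / (μ (1 + i + 1) : ℚ)))
      = (ξ (0 + 1) : ℚ) / (μ (0 + 1) : ℚ) - (ξ (r + 1) : ℚ) / (μ (r + 1) : ℚ) := by
    have h := Finset.sum_range_sub' (f := fun i => (ξ (i + 1) : ℚ) / (μ (i + 1) : ℚ)) r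
    rw [← h]
    apply Finset.sum_congr rfl
    intro i _
    rw [Nat.add_comm 1 i]
  rw [htel, hξ_top, hμ1, hq]
  push_cast
  ring
end
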